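/- arXiv:1903.06222 — 4 statements merged into one kernel-verified Lean document; each statement's English description precedes it below -/
import Mathlib

section
/- Let G be a linearly ordered abelian group and n ≥ 1 an integer. Let H be the set of all g in G such that every open interval (a,b) with 0 ≤ a ≤ b ≤ |g| that contains at least n elements contains an element divisible by n (i.e. of the form n·x). Then H is a convex subgroup of G. -/
/-- The set of `g ∈ G` such that every open interval `(a,b)` with `0 ≤ a ≤ b ≤ |g|`
containing at least `n` elements contains an element divisible by `n`. -/
def RegSet (G : Type*) [AddCommGroup G] [LinearOrder G] [IsOrderedAddMonoid G] (n : ℕ) : Set G :=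
  {g : G | ∀ a b : G, 0 ≤ a → a ≤ b → b ≤ |g| →
    (∃ f : Fin n ↪ G, ∀ i, f i ∈ Set.Ioo a b) → ∃ x : G, n • x ∈ Set.Ioo a b}

namespace RegAux

variable {G : Type*} [AddCommGroup G] [LinearOrder G] [IsOrderedAddMonoid G]

/-! ### linear-arithmetic certificate helpers -/

lemma wle1 {X Y A B : G} (h1 : A ≤ B) (e : Y - X = B - A) : X ≤ Y := by
  apply sub_nonneg.mp; rw [e]; exact sub_nonneg.mpr h1

lemma wle2 {X Y A B C D : G} (h1 : A ≤ B) (h2 : C ≤ D)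
    (e : Y - X = B - A + (D - C)) : X ≤ Y := by
  apply sub_nonneg.mp; rw [e]
  exact add_nonneg (sub_nonneg.mpr h1) (sub_nonneg.mpr h2)

lemma wle3 {X Y A B C D E F : G} (h1 : A ≤ B) (h2 : C ≤ D) (h3 : E ≤ F)
    (e : Y - X = B - A + (D - C) + (F - E)) : X ≤ Y := by
  apply sub_nonneg.mp; rw [e]
  exact add_nonneg (add_nonneg (sub_nonneg.mpr h1) (sub_nonneg.mpr h2)) (sub_nonneg.mpr h3)

lemma wle4 {X Y A B C D E F A' B' : G} (h1 : A ≤ B) (h2 : C ≤ D) (h3 : E ≤ F) (h4 : A' ≤ B')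
    (e : Y - X = B - A + (D - C) + (F - E) + (B' - A')) : X ≤ Y := by
  apply sub_nonneg.mp; rw [e]
  exact add_nonneg (add_nonneg (add_nonneg (sub_nonneg.mpr h1) (sub_nonneg.mpr h2))
    (sub_nonneg.mpr h3)) (sub_nonneg.mpr h4)

lemma wlt1 {X Y A B : G} (h1 : A < B) (e : Y - X = B - A) : X < Y := by
  apply sub_pos.mp; rw [e]; exact sub_pos.mpr h1

lemma wlt2 {X Y A B C D : G} (h1 : A < B) (h2 : C ≤ D)
    (e : Y - X = B - A + (D - C)) : X < Y := by
  apply sub_pos.mp; rw [e]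
  exact add_pos_of_pos_of_nonneg (sub_pos.mpr h1) (sub_nonneg.mpr h2)

lemma wlt3 {X Y A B C D E F : G} (h1 : A < B) (h2 : C ≤ D) (h3 : E ≤ F)
    (e : Y - X = B - A + (D - C) + (F - E)) : X < Y := by
  apply sub_pos.mp; rw [e]
  exact add_pos_of_pos_of_nonneg
    (add_pos_of_pos_of_nonneg (sub_pos.mpr h1) (sub_nonneg.mpr h2)) (sub_nonneg.mpr h3)

lemma wlt4 {X Y A B C D E F A' B' : G} (h1 : A < B) (h2 : C ≤ D) (h3 : E ≤ F) (h4 : A' ≤ B')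
    (e : Y - X = B - A + (D - C) + (F - E) + (B' - A')) : X < Y := by
  apply sub_pos.mp; rw [e]
  exact add_pos_of_pos_of_nonneg (add_pos_of_pos_of_nonneg
    (add_pos_of_pos_of_nonneg (sub_pos.mpr h1) (sub_nonneg.mpr h2)) (sub_nonneg.mpr h3))
    (sub_nonneg.mpr h4)

lemma half_le {a b : G} (h : a + a ≤ b + b) : a ≤ b := by
  by_contra hc
  push_neg at hc
  exact absurd h (not_le.mpr (add_lt_add hc hc))

lemma sm_le {a : G} (ha : 0 ≤ a) {i j : ℕ} (h : i ≤ j) : i • a ≤ j • a :=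
  nsmul_le_nsmul_left ha h

lemma sm_lt {a : G} (ha : 0 < a) {i j : ℕ} (h : i < j) : i • a < j • a :=
  nsmul_lt_nsmul_left ha h

lemma em_le {a b : G} (h : a ≤ b) (k : ℕ) : k • a ≤ k • b :=
  nsmul_le_nsmul_right h k

lemma em_lt {a b : G} (h : a < b) {k : ℕ} (hk : k ≠ 0) : k • a < k • b :=
  nsmul_lt_nsmul_right hk h

/-- interval ball property: every open interval inside `[-c, c]` with `n` points
contains an `n`-divisible element. -/
def Ball (n : ℕ) (c : G) : Prop :=
  ∀ α β : G, -c ≤ α → β ≤ c → (∃ f : Fin n ↪ G, ∀ i, f i ∈ Set.Ioo α β) →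
    ∃ x : G, n • x ∈ Set.Ioo α β

lemma mem_one {g : G} : g ∈ RegSet G 1 := by
  intro a b _ _ _ hf
  obtain ⟨f, hf⟩ := hf
  exact ⟨f 0, by simpa using hf 0⟩

lemma mono {n : ℕ} {s t : G} (h : |t| ≤ |s|) (hs : s ∈ RegSet G n) : t ∈ RegSet G n :=
  fun a b h0 hab hb hf => hs a b h0 hab (hb.trans h) hf

lemma ball_of_mem {n : ℕ} (hn : 1 ≤ n) {s : G} (hs : s ∈ RegSet G n) : Ball n |s| := by
  intro α β hα hβ hf
  obtain ⟨f, hf⟩ := hf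
  have hpt := hf ⟨0, hn⟩
  have hαβ : α < β := lt_trans hpt.1 hpt.2
  rcases le_or_gt 0 α with h0 | h0
  · exact hs α β h0 hαβ.le hβ ⟨f, hf⟩
  · rcases le_or_gt β 0 with h1 | h1
    · have hneginj : Function.Injective (fun i : Fin n => -(f i)) := by
        intro i j hij
        exact f.injective (by simpa using hij)
      obtain ⟨x, hx⟩ := hs (-β) (-α) (wle1 h1 (by abel)) (wle1 hαβ.le (by abel))
        (wle1 hα (by abel))
        ⟨⟨fun i => -(f i), hneginj⟩, fun i => ⟨by simpa using (hf i).2, by simpa using (hf i).1⟩⟩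
      refine ⟨-x, ?_, ?_⟩
      · rw [smul_neg]
        exact wlt1 hx.2 (by abel)
      · rw [smul_neg]
        exact wlt1 hx.1 (by abel)
    · exact ⟨0, by simpa using ⟨h0, h1⟩⟩

/-- arithmetic-progression points -/
lemma ap_pts (m : ℕ) {α β : G} (q w : G) (hw : 0 < w) (hα : α < q)
    (hβ : q + (m+1) • w < β) :
    ∃ f : Fin (m+2) ↪ G, ∀ i, f i ∈ Set.Ioo α β := by
  have hinj : Function.Injective (fun i : Fin (m+2) => q + (i : ℕ) • w) := by
    intro i j hij
    simp only [add_right_inj] at hij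
    by_contra hne
    rcases Nat.lt_or_ge (i : ℕ) (j : ℕ) with h | h
    · exact absurd hij (ne_of_lt (sm_lt hw h))
    · have h2 : (j : ℕ) < (i : ℕ) := by
        rcases Nat.lt_or_ge (j : ℕ) (i : ℕ) with h' | h'
        · exact h'
        · exact absurd (Fin.ext (le_antisymm h' h)) hne
      exact absurd hij.symm (ne_of_lt (sm_lt hw h2))
  refine ⟨⟨fun i => q + (i : ℕ) • w, hinj⟩, fun i => ⟨?_, ?_⟩⟩
  · exact lt_of_lt_of_le hα (le_add_of_nonneg_right (nsmul_nonneg hw.le _))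
  · refine lt_of_le_of_lt ?_ hβ
    have hi : (i : ℕ) ≤ m + 1 := by omega
    exact add_le_add_right (sm_le hw.le hi) q

/-- one extra point plus an AP of length `m+1` -/
lemma cons_pts (m : ℕ) {α β : G} (p q w : G) (hw : 0 < w)
    (hp : p ∈ Set.Ioo α β) (hq : α < q) (hqβ : q + m • w < β)
    (hpq : ∀ k : ℕ, k ≤ m → p ≠ q + k • w) :
    ∃ f : Fin (m+2) ↪ G, ∀ i, f i ∈ Set.Ioo α β := by
  have hinj : Function.Injective
      (Fin.cons p (fun i : Fin (m+1) => q + (i : ℕ) • w) : Fin (m+2) → G) := by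
    rw [Fin.cons_injective_iff]
    constructor
    · rintro ⟨i, hi⟩
      exact hpq (i : ℕ) (by omega) hi.symm
    · intro i j hij
      simp only [add_right_inj] at hij
      by_contra hne
      rcases Nat.lt_or_ge (i : ℕ) (j : ℕ) with h | h
      · exact absurd hij (ne_of_lt (sm_lt hw h))
      · have h2 : (j : ℕ) < (i : ℕ) := by
          rcases Nat.lt_or_ge (j : ℕ) (i : ℕ) with h' | h'
          · exact h'
          · exact absurd (Fin.ext (le_antisymm h' h)) hne
        exact absurd hij.symm (ne_of_lt (sm_lt hw h2))
  refine ⟨⟨_, hinj⟩, fun i => ?_⟩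
  simp only [Function.Embedding.coeFn_mk]
  induction i using Fin.cases with
  | zero => rw [Fin.cons_zero]; exact hp
  | succ i =>
    rw [Fin.cons_succ]
    constructor
    · exact lt_of_lt_of_le hq (le_add_of_nonneg_right (nsmul_nonneg hw.le _))
    · refine lt_of_le_of_lt ?_ hqβ
      exact add_le_add_right (sm_le hw.le (by omega)) q

/-- Main local lemma: inside `(-c, c)` with one-`e` padding, every closed window
`[y, y + (m+1)e]` contains an `(m+2)`-divisible element. -/
lemma lemA (m : ℕ) {c e y : G} (hB : Ball (m+2) c) (he : 0 < e)
    (hlow : -c ≤ y - e) (hhigh : y + (m+1) • e < c) :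
    ∃ x : G, (m+2) • x ∈ Set.Icc y (y + (m+1) • e) := by
  obtain ⟨L, hL⟩ : ∃ L : G, L = (m+1) • e := ⟨_, rfl⟩
  obtain ⟨Me, hMe⟩ : ∃ Me : G, Me = m • e := ⟨_, rfl⟩
  rw [← hL] at hhigh ⊢
  have hLMe : L = Me + e := by rw [hL, hMe]; exact succ_nsmul e m
  have hLe : e ≤ L := by
    rw [hL]
    calc e = 1 • e := (one_nsmul e).symm
    _ ≤ (m+1) • e := sm_le he.le (by omega)
  have hL0 : 0 ≤ L := le_trans he.le hLe
  obtain ⟨δ, hδdef⟩ : ∃ δ : G, δ = min e (c - (y + L)) := ⟨_, rfl⟩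
  have hδpos : 0 < δ := by rw [hδdef]; exact lt_min he (sub_pos.mpr hhigh)
  have hδe : δ ≤ e := by rw [hδdef]; exact min_le_left _ _
  have hδc : y + L + δ ≤ c := by
    have h := min_le_right e (c - (y + L))
    rw [← hδdef] at h
    exact wle1 h (by abel)
  have hyc : -c ≤ y := wle2 hlow he.le (by abel)
  -- first application
  obtain ⟨x₁, hx₁⟩ := hB (y - e) (y + L + δ) hlow hδc
    (by
      refine ap_pts m y e he (wlt1 he (by abel)) ?_
      rw [← hL]
      exact wlt1 hδpos (by abel))
  obtain ⟨X, hX⟩ : ∃ X : G, X = (m+2) • x₁ := ⟨_, rfl⟩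
  rw [← hX] at hx₁
  rcases le_or_gt y X with hX1 | hX1
  · rcases le_or_gt X (y + L) with hX2 | hX2
    · exact ⟨x₁, by rw [← hX]; exact hX1, by rw [← hX]; exact hX2⟩
    -- upper slack : X ∈ (y+L, y+L+δ)
    · have hXc : X < c := lt_of_lt_of_le hx₁.2 hδc
      obtain ⟨x₂, hx₂⟩ := hB y X hyc hXc.le
        (by
          refine cons_pts m (X - e) (y + e) e he
            ⟨wlt2 hX2 hLe (by abel), wlt1 he (by abel)⟩
            (wlt1 he (by abel)) ?_ ?_
          · rw [← hMe]
            exact wlt1 hX2 (by rw [hLMe]; abel)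
          · intro k hk
            rcases Nat.lt_or_ge k m with hkm | hkm
            · apply ne_of_gt
              have h1 : (k+1) • e ≤ m • e := sm_le he.le (by omega)
              rw [← hMe] at h1
              have h2 : (k:ℕ) • e = (k+1) • e - e := by
                rw [succ_nsmul]; abel
              rw [h2]
              exact wlt2 hX2 h1 (by rw [hLMe]; abel)
            · have hkm' : k = m := by omega
              subst hkm'
              apply ne_of_lt
              rw [← hMe]
              exact wlt2 hx₁.2 hδe (by rw [hLMe]; abel))
      obtain ⟨Z, hZ⟩ : ∃ Z : G, Z = (m+2) • x₂ := ⟨_, rfl⟩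
      rw [← hZ] at hx₂
      rcases le_or_gt Z (y + L) with hZ2 | hZ2
      · exact ⟨x₂, by rw [← hZ]; exact hx₂.1.le, by rw [← hZ]; exact hZ2⟩
      · obtain ⟨w, hw⟩ : ∃ w : G, w = X - Z := ⟨_, rfl⟩
        have hw0 : 0 < w := by rw [hw]; exact sub_pos.mpr hx₂.2
        have hwδ : w < δ := wlt2 hx₁.2 hZ2.le (by rw [hw]; abel)
        have hwe' : w < e := lt_of_lt_of_le hwδ hδe
        have hmw : (m+1) • w < L := by rw [hL]; exact em_lt hwe' (by omega)
        obtain ⟨x₃, hx₃⟩ := hB y (y + L + w) hyc (wle2 hδc hwδ.le (by abel))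
          (by
            refine ap_pts m (y + L - (m+1) • w) w hw0 (wlt1 hmw (by abel)) ?_
            exact wlt1 hw0 (by abel))
        obtain ⟨V, hV⟩ : ∃ V : G, V = (m+2) • x₃ := ⟨_, rfl⟩
        rw [← hV] at hx₃
        rcases le_or_gt V (y + L) with hV2 | hV2
        · exact ⟨x₃, by rw [← hV]; exact hx₃.1.le, by rw [← hV]; exact hV2⟩
        · refine ⟨x₃ - x₁ + x₂, ?_, ?_⟩
          all_goals
            have heq : (m+2) • (x₃ - x₁ + x₂) = V - w := by
              rw [smul_add, smul_sub, ← hX, ← hZ, ← hV, hw]; abel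
            rw [heq]
          · exact wle3 hV2.le hLe hwe'.le (by abel)
          · exact wle1 hx₃.2.le (by abel)
  · -- lower slack : X ∈ (y-e, y)
    obtain ⟨x₂, hx₂⟩ := hB X (y + L) (wle2 hx₁.1.le hlow (by abel)) hhigh.le
      (by
        refine cons_pts m (X + e) y e he
          ⟨lt_add_of_pos_right X he, wlt2 hX1 hLe (by abel)⟩ hX1 ?_ ?_
        · rw [← hMe]
          exact wlt1 he (by rw [hLMe]; abel)
        · intro k hk
          rcases Nat.eq_zero_or_pos k with h0 | h0
          · subst h0
            rw [zero_nsmul, add_zero]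
            exact ne_of_gt (wlt1 hx₁.1 (by abel))
          · apply ne_of_lt
            have h1 : (1:ℕ) • e ≤ k • e := sm_le he.le (by omega)
            rw [one_nsmul] at h1
            exact wlt2 hX1 h1 (by abel))
    obtain ⟨Z, hZ⟩ : ∃ Z : G, Z = (m+2) • x₂ := ⟨_, rfl⟩
    rw [← hZ] at hx₂
    rcases le_or_gt y Z with hZ2 | hZ2
    · exact ⟨x₂, by rw [← hZ]; exact hZ2, by rw [← hZ]; exact hx₂.2.le⟩
    · obtain ⟨w, hw⟩ : ∃ w : G, w = Z - X := ⟨_, rfl⟩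
      have hw0 : 0 < w := by rw [hw]; exact sub_pos.mpr hx₂.1
      have hwe' : w < e := wlt2 hx₁.1 hZ2.le (by rw [hw]; abel)
      have hmw : (m+1) • w < L := by rw [hL]; exact em_lt hwe' (by omega)
      obtain ⟨x₃, hx₃⟩ := hB (y - w) (y + L) (wle2 hlow hwe'.le (by abel)) hhigh.le
        (by
          refine ap_pts m y w hw0 (wlt1 hw0 (by abel)) ?_
          exact wlt1 hmw (by abel))
      obtain ⟨V, hV⟩ : ∃ V : G, V = (m+2) • x₃ := ⟨_, rfl⟩
      rw [← hV] at hx₃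
      rcases le_or_gt y V with hV2 | hV2
      · exact ⟨x₃, by rw [← hV]; exact hV2, by rw [← hV]; exact hx₃.2.le⟩
      · refine ⟨x₃ + x₂ - x₁, ?_, ?_⟩
        all_goals
          have heq : (m+2) • (x₃ + x₂ - x₁) = V + w := by
            rw [smul_sub, smul_add, ← hX, ← hZ, ← hV, hw]; abel
          rw [heq]
        · exact wle1 hx₃.1.le (by abel)
        · exact wle3 hV2.le hLe hwe'.le (by abel)

lemma bandU (m : ℕ) {c e : G} (hB : Ball (m+2) c) (he : 0 < e)
    (hsm : (2*(m+2)) • e ≤ c) (u : G) (hu0 : 0 ≤ u) (huc : u < c) :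
    ∃ x : G, (m+2) • x ∈ Set.Icc (u + e) (u + e + (m+1) • e) := by
  obtain ⟨L, hL⟩ : ∃ L : G, L = (m+1) • e := ⟨_, rfl⟩
  obtain ⟨N, hN⟩ : ∃ N : G, N = (m+2) • e := ⟨_, rfl⟩
  rw [← hL]
  have hNL : N = L + e := by rw [hN, hL]; exact succ_nsmul e (m+1)
  have hN0 : 0 ≤ N := by rw [hN]; exact nsmul_nonneg he.le _
  have hsmN : N + N ≤ c := by
    have h2 : (2*(m+2)) • e = (m+2) • e + (m+2) • e := by rw [two_mul, add_nsmul]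
    rw [h2, ← hN] at hsm
    exact hsm
  have hc0 : 0 ≤ c := le_trans (add_nonneg hN0 hN0) hsmN
  by_cases hcase : u + N < c
  · have h := lemA m hB he (show -c ≤ (u+e) - e from wle2 hu0 hc0 (by abel))
      (show (u+e) + (m+1) • e < c from by rw [← hL]; exact wlt1 hcase (by rw [hNL]; abel))
    rw [← hL] at h
    exact h
  · push_neg at hcase
    obtain ⟨u₂, hu₂⟩ : ∃ u₂ : G, u₂ = u + N - c := ⟨_, rfl⟩
    have hu₂0 : 0 ≤ u₂ := by rw [hu₂]; exact sub_nonneg.mpr hcase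
    have hu₂c : u₂ + N < c := wlt2 huc hsmN (by rw [hu₂]; abel)
    obtain ⟨xs, hxs⟩ := lemA m hB he (show -c ≤ (u₂+e) - e from wle2 hu₂0 hc0 (by abel))
      (show (u₂+e) + (m+1) • e < c from by rw [← hL]; exact wlt1 hu₂c (by rw [hNL]; abel))
    rw [← hL] at hxs
    obtain ⟨s, hs⟩ : ∃ s : G, s = (m+2) • xs := ⟨_, rfl⟩
    rw [← hs] at hxs
    obtain ⟨xt, hxt⟩ := lemA m hB he
      (show -c ≤ ((u+e) - s) - e from wle3 hxs.2 hsmN hc0 (by rw [hu₂, hNL]; abel))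
      (show ((u+e) - s) + (m+1) • e < c from by
        rw [← hL]
        exact wlt2 he hxs.1 (by rw [hu₂, hNL]; abel))
    rw [← hL] at hxt
    obtain ⟨t, ht⟩ : ∃ t : G, t = (m+2) • xt := ⟨_, rfl⟩
    rw [← ht] at hxt
    have heq : (m+2) • (xs + xt) = s + t := by rw [smul_add, ← hs, ← ht]
    refine ⟨xs + xt, ?_, ?_⟩
    · rw [heq]; exact wle1 hxt.1 (by abel)
    · rw [heq]; exact wle1 hxt.2 (by abel)

lemma smallPos (m : ℕ) {c e y : G} (hB : Ball (m+2) c) (he : 0 < e)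
    (hsm : (2*(m+2)) • e ≤ c) (hy : 0 < y) (hh : y + (m+1) • e < 2 • c) :
    ∃ x : G, (m+2) • x ∈ Set.Icc y (y + (m+1) • e) := by
  obtain ⟨L, hL⟩ : ∃ L : G, L = (m+1) • e := ⟨_, rfl⟩
  obtain ⟨N, hN⟩ : ∃ N : G, N = (m+2) • e := ⟨_, rfl⟩
  rw [← hL] at hh ⊢
  rw [two_nsmul] at hh
  have hNL : N = L + e := by rw [hN, hL]; exact succ_nsmul e (m+1)
  have hN0 : 0 ≤ N := by rw [hN]; exact nsmul_nonneg he.le _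
  have hL0 : 0 ≤ L := by rw [hL]; exact nsmul_nonneg he.le _
  have hsmN : N + N ≤ c := by
    have h2 : (2*(m+2)) • e = (m+2) • e + (m+2) • e := by rw [two_mul, add_nsmul]
    rw [h2, ← hN] at hsm
    exact hsm
  have hc0 : 0 ≤ c := le_trans (add_nonneg hN0 hN0) hsmN
  have heN : e ≤ N := by rw [hNL]; exact le_add_of_nonneg_left hL0
  have hNc : N ≤ c := wle2 hsmN hN0 (by abel)
  have hec : e ≤ c := le_trans heN hNc
  by_cases hcase : y + L < c
  · have h := lemA m hB he (show -c ≤ y - e from wle2 hy.le hec (by abel))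
      (show y + (m+1) • e < c from by rw [← hL]; exact hcase)
    rw [← hL] at h
    exact h
  · push_neg at hcase
    obtain ⟨u, hu⟩ : ∃ u : G, u = y + L - c := ⟨_, rfl⟩
    have hu0 : 0 ≤ u := by rw [hu]; exact sub_nonneg.mpr hcase
    have huc : u < c := wlt1 hh (by rw [hu]; abel)
    obtain ⟨xs, hxs⟩ := bandU m hB he hsm u hu0 huc
    rw [← hL] at hxs
    obtain ⟨s, hs⟩ : ∃ s : G, s = (m+2) • xs := ⟨_, rfl⟩
    rw [← hs] at hxs
    obtain ⟨xt, hxt⟩ := lemA m hB he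
      (show -c ≤ (y - s) - e from wle3 hxs.2 hsmN hc0 (by rw [hu, hNL]; abel))
      (show (y - s) + (m+1) • e < c from by
        rw [← hL]
        exact wlt2 he hxs.1 (by rw [hu]; abel))
    rw [← hL] at hxt
    obtain ⟨t, ht⟩ : ∃ t : G, t = (m+2) • xt := ⟨_, rfl⟩
    rw [← ht] at hxt
    have heq : (m+2) • (xs + xt) = s + t := by rw [smul_add, ← hs, ← ht]
    refine ⟨xs + xt, ?_, ?_⟩
    · rw [heq]; exact wle1 hxt.1 (by abel)
    · rw [heq]; exact wle1 hxt.2 (by abel)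

lemma small (m : ℕ) {c e y : G} (hB : Ball (m+2) c) (he : 0 < e)
    (hsm : (2*(m+2)) • e ≤ c) (hlow : -(2 • c) ≤ y - e) (hh : y + (m+1) • e < 2 • c) :
    ∃ x : G, (m+2) • x ∈ Set.Icc y (y + (m+1) • e) := by
  rcases lt_or_ge 0 y with hy | hy
  · exact smallPos m hB he hsm hy hh
  · rcases lt_or_ge (y + (m+1) • e) 0 with hneg | hpos
    · have h1 : (0:G) < -(y + (m+1) • e) := neg_pos.mpr hneg
      have h2 : -(y + (m+1) • e) + (m+1) • e < 2 • c := by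
        obtain ⟨L, hL⟩ : ∃ L : G, L = (m+1) • e := ⟨_, rfl⟩
        rw [← hL]
        exact wlt2 he hlow (by abel)
      obtain ⟨x, hx⟩ := smallPos m hB he hsm h1 h2
      obtain ⟨L, hL⟩ : ∃ L : G, L = (m+1) • e := ⟨_, rfl⟩
      rw [← hL] at hx ⊢
      refine ⟨-x, ?_, ?_⟩
      · rw [smul_neg]; exact wle1 hx.2 (by abel)
      · rw [smul_neg]; exact wle1 hx.1 (by abel)
    · exact ⟨0, by rw [smul_zero]; exact ⟨hy, hpos⟩⟩

lemma sepPos (m : ℕ) {c e y : G} (hsep : ∀ t : G, 0 < t → e ≤ t) (he : 0 < e)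
    (hbig : c < (2*(m+2)) • e) (hy : 0 < y) (hh : y + (m+1) • e < 2 • c) :
    ∃ x : G, (m+2) • x ∈ Set.Icc y (y + (m+1) • e) := by
  obtain ⟨L, hL⟩ : ∃ L : G, L = (m+1) • e := ⟨_, rfl⟩
  obtain ⟨N, hN⟩ : ∃ N : G, N = (m+2) • e := ⟨_, rfl⟩
  rw [← hL] at hh ⊢
  have hNL : N = L + e := by rw [hN, hL]; exact succ_nsmul e (m+1)
  have hL0 : 0 ≤ L := by rw [hL]; exact nsmul_nonneg he.le _
  have main : ∀ k : ℕ, ((m+2) • (k • e) < y) ∨ ∃ x : G, (m+2) • x ∈ Set.Icc y (y + L) := by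
    intro k
    induction k with
    | zero =>
      left
      have h0 : (m+2) • ((0:ℕ) • e) = 0 := by rw [zero_nsmul, smul_zero]
      rw [h0]; exact hy
    | succ k ih =>
      rcases ih with hk | hx
      · obtain ⟨A, hA⟩ : ∃ A : G, A = (m+2) • (k • e) := ⟨_, rfl⟩
        obtain ⟨B, hB'⟩ : ∃ B : G, B = (m+2) • ((k+1) • e) := ⟨_, rfl⟩
        rw [← hA] at hk
        have hstep : B = A + N := by
          rw [hA, hB', hN, succ_nsmul e k, nsmul_add]
        rcases lt_or_ge B y with h1 | h1
        · left; rw [← hB']; exact h1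
        · rcases le_or_gt B (y + L) with h2 | h2
          · right; exact ⟨(k+1) • e, by rw [← hB']; exact h1, by rw [← hB']; exact h2⟩
          · exfalso
            have hgd := hsep _ (sub_pos.mpr h2)
            have hcon : B - (y + L) < e := wlt1 hk (by rw [hstep, hNL]; abel)
            exact absurd hgd (not_le.mpr hcon)
      · right; exact hx
  rcases main 4 with hlt | hok
  · exfalso
    obtain ⟨Q, hQ⟩ : ∃ Q : G, Q = (2*(m+2)) • e := ⟨_, rfl⟩
    have e1 : (m+2) • ((4:ℕ) • e) = (4 * (m+2)) • e := (mul_nsmul e 4 (m+2)).symm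
    have e2 : (4 * (m+2)) • e = (2*(m+2)) • e + (2*(m+2)) • e := by
      rw [← add_nsmul]
      congr 1
      ring
    rw [e1, e2, ← hQ] at hlt
    have hbig' : c < Q := by rw [hQ]; exact hbig
    have hy2 : y < 2 • c := wlt2 hh hL0 (by abel)
    have h2q : 2 • c < Q + Q := by rw [two_nsmul]; exact add_lt_add hbig' hbig'
    exact lt_irrefl _ (hlt.trans (hy2.trans h2q))
  · exact hok

lemma sep (m : ℕ) {c e y : G} (hsep : ∀ t : G, 0 < t → e ≤ t) (he : 0 < e)
    (hbig : c < (2*(m+2)) • e) (hlow : -(2 • c) ≤ y - e) (hh : y + (m+1) • e < 2 • c) :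
    ∃ x : G, (m+2) • x ∈ Set.Icc y (y + (m+1) • e) := by
  rcases lt_or_ge 0 y with hy | hy
  · exact sepPos m hsep he hbig hy hh
  · rcases lt_or_ge (y + (m+1) • e) 0 with hneg | hpos
    · have h1 : (0:G) < -(y + (m+1) • e) := neg_pos.mpr hneg
      have h2 : -(y + (m+1) • e) + (m+1) • e < 2 • c := by
        obtain ⟨L, hL⟩ : ∃ L : G, L = (m+1) • e := ⟨_, rfl⟩
        rw [← hL]
        exact wlt2 he hlow (by abel)
      obtain ⟨x, hx⟩ := sepPos m hsep he hbig h1 h2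
      obtain ⟨L, hL⟩ : ∃ L : G, L = (m+1) • e := ⟨_, rfl⟩
      rw [← hL] at hx ⊢
      refine ⟨-x, ?_, ?_⟩
      · rw [smul_neg]; exact wle1 hx.2 (by abel)
      · rw [smul_neg]; exact wle1 hx.1 (by abel)
    · exact ⟨0, by rw [smul_zero]; exact ⟨hy, hpos⟩⟩

lemma ind (m : ℕ) {c : G} (hB : Ball (m+2) c) :
    ∀ (k : ℕ) (e y : G), 0 < e → (2*(m+2)) • e ≤ (2^k) • c →
      -(2 • c) ≤ y - e → y + (m+1) • e < 2 • c →
      ∃ x : G, (m+2) • x ∈ Set.Icc y (y + (m+1) • e) := by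
  intro k
  induction k with
  | zero =>
    intro e y he hf hl hh
    rw [pow_zero, one_nsmul] at hf
    exact small m hB he hf hl hh
  | succ k ih =>
    intro e y he hf hl hh
    by_cases hsm : (2*(m+2)) • e ≤ c
    · exact small m hB he hsm hl hh
    · push_neg at hsm
      by_cases hgap : ∃ ε : G, 0 < ε ∧ ε < e
      · obtain ⟨ε, hε0, hεe⟩ := hgap
        obtain ⟨e', he'def⟩ : ∃ e' : G, e' = min ε (e - ε) := ⟨_, rfl⟩
        have he' : 0 < e' := by rw [he'def]; exact lt_min hε0 (sub_pos.mpr hεe)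
        have hee : e' + e' ≤ e := by
          have ha : e' ≤ ε := by rw [he'def]; exact min_le_left _ _
          have hb : e' ≤ e - ε := by rw [he'def]; exact min_le_right _ _
          exact wle2 ha hb (by abel)
        have he'e : e' ≤ e := le_trans (le_add_of_nonneg_left he'.le) hee
        have hf' : (2*(m+2)) • e' ≤ (2^k) • c := by
          apply half_le
          calc (2*(m+2)) • e' + (2*(m+2)) • e'
              = (2*(m+2)) • (e' + e') := (nsmul_add e' e' _).symm
            _ ≤ (2*(m+2)) • e := em_le hee _
            _ ≤ (2^(k+1)) • c := hf
            _ = (2^k) • c + (2^k) • c := by rw [pow_succ, mul_nsmul, two_nsmul]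
        have hl' : -(2 • c) ≤ y - e' := wle2 hl he'e (by abel)
        have hme : (m+1) • e' ≤ (m+1) • e := em_le he'e _
        have hh' : y + (m+1) • e' < 2 • c := by
          obtain ⟨L, hL⟩ : ∃ L : G, L = (m+1) • e := ⟨_, rfl⟩
          obtain ⟨L', hL'⟩ : ∃ L' : G, L' = (m+1) • e' := ⟨_, rfl⟩
          rw [← hL'] ; rw [← hL] at hh
          have hme2 : L' ≤ L := by rw [hL, hL']; exact hme
          exact wlt2 hh hme2 (by abel)
        obtain ⟨x, hx⟩ := ih e' y he' hf' hl' hh'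
        exact ⟨x, hx.1, le_trans hx.2 (add_le_add_right hme y)⟩
      · push_neg at hgap
        exact sep m (fun t ht => hgap t ht) he hsm hl hh

lemma gaps (m : ℕ) {a b : G} (f : Fin (m+2) ↪ G) (hf : ∀ i, f i ∈ Set.Ioo a b) :
    ∃ y e : G, 0 < e ∧ a < y ∧ y + (m+1) • e < b := by
  classical
  have hcard : (Finset.univ.image f).card = m + 2 := by
    rw [Finset.card_image_of_injective _ f.injective, Finset.card_univ, Fintype.card_fin]
  set oi := (Finset.univ.image f).orderIsoOfFin hcard with hoi
  have hpmem : ∀ i : Fin (m+2), (oi i : G) ∈ Set.Ioo a b := by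
    intro i
    have h1 : (oi i : G) ∈ Finset.univ.image f := (oi i).2
    rw [Finset.mem_image] at h1
    obtain ⟨j, _, hj⟩ := h1
    rw [← hj]; exact hf j
  have hmono : ∀ {i j : Fin (m+2)}, i < j → (oi i : G) < (oi j : G) := by
    intro i j hij
    exact_mod_cast oi.strictMono hij
  have hDne : (Finset.univ.image
      (fun i : Fin (m+1) => (oi i.succ : G) - (oi i.castSucc : G))).Nonempty :=
    ⟨_, Finset.mem_image_of_mem _ (Finset.mem_univ 0)⟩
  obtain ⟨e, hemem, hemin⟩ :
      ∃ e ∈ Finset.univ.image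
        (fun i : Fin (m+1) => (oi i.succ : G) - (oi i.castSucc : G)),
        ∀ x ∈ Finset.univ.image
          (fun i : Fin (m+1) => (oi i.succ : G) - (oi i.castSucc : G)), e ≤ x :=
    ⟨_, Finset.min'_mem _ hDne, fun x hx => Finset.min'_le _ x hx⟩
  have hepos : 0 < e := by
    rw [Finset.mem_image] at hemem
    obtain ⟨i, _, hi⟩ := hemem
    rw [← hi]
    exact sub_pos.mpr (hmono (Fin.castSucc_lt_succ (i := i)))
  have hgapge : ∀ i : Fin (m+1), (oi i.castSucc : G) + e ≤ (oi i.succ : G) := by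
    intro i
    have h1 : e ≤ (oi i.succ : G) - (oi i.castSucc : G) :=
      hemin _ (Finset.mem_image_of_mem _ (Finset.mem_univ i))
    exact wle1 h1 (by abel)
  have hkey : ∀ (j : ℕ) (hj : j < m + 2),
      (oi ⟨0, by omega⟩ : G) + j • e ≤ (oi ⟨j, hj⟩ : G) := by
    intro j
    induction j with
    | zero =>
      intro hj
      exact le_of_eq (by rw [zero_nsmul, add_zero])
    | succ j ihj =>
      intro hj
      have hj' : j < m + 2 := by omega
      have hjm : j < m + 1 := by omega
      have hstep : (oi ⟨j, hj'⟩ : G) + e ≤ (oi ⟨j+1, hj⟩ : G) := by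
        have h1 := hgapge ⟨j, hjm⟩
        have hcs : (⟨j, hjm⟩ : Fin (m+1)).castSucc = ⟨j, hj'⟩ := rfl
        have hsc : (⟨j, hjm⟩ : Fin (m+1)).succ = ⟨j+1, hj⟩ := rfl
        rw [hcs, hsc] at h1
        exact h1
      have hstep2 := ihj hj'
      obtain ⟨J, hJ⟩ : ∃ J : G, J = j • e := ⟨_, rfl⟩
      rw [← hJ] at hstep2
      rw [succ_nsmul, ← hJ]
      exact wle2 hstep hstep2 (by abel)
  refine ⟨(oi ⟨0, by omega⟩ : G), e, hepos, (hpmem _).1, ?_⟩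
  have hk := hkey (m+1) (by omega)
  have hbb := (hpmem ⟨m+1, by omega⟩).2
  exact lt_of_le_of_lt hk hbb

lemma regset_add {n : ℕ} (hn : 1 ≤ n) {g h : G} (hg : g ∈ RegSet G n) (hh : h ∈ RegSet G n) :
    g + h ∈ RegSet G n := by
  rcases eq_or_lt_of_le hn with h1 | h2
  · subst h1
    exact mem_one
  · obtain ⟨m, rfl⟩ : ∃ m, n = m + 2 := ⟨n - 2, by omega⟩
    intro a b ha hab hb hpts
    obtain ⟨f, hf⟩ := hpts
    obtain ⟨c, hcdef⟩ : ∃ c : G, c = |g| ⊔ |h| := ⟨_, rfl⟩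
    have hcg : |g| ≤ c := by rw [hcdef]; exact le_max_left _ _
    have hch : |h| ≤ c := by rw [hcdef]; exact le_max_right _ _
    have hc0 : 0 ≤ c := le_trans (abs_nonneg g) hcg
    have hball : Ball (m+2) c := by
      rcases le_total |g| |h| with h1 | h1
      · have hcc : c = |h| := by rw [hcdef]; exact max_eq_right h1
        rw [hcc]; exact ball_of_mem (by omega) hh
      · have hcc : c = |g| := by rw [hcdef]; exact max_eq_left h1
        rw [hcc]; exact ball_of_mem (by omega) hg
    have hb2 : b ≤ c + c :=
      le_trans hb (le_trans (abs_add_le g h) (add_le_add hcg hch))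
    obtain ⟨y, e, he, hay, hyb⟩ := gaps m f hf
    obtain ⟨L, hL⟩ : ∃ L : G, L = (m+1) • e := ⟨_, rfl⟩
    rw [← hL] at hyb
    have hLb : L < c + c := wlt4 hyb hb2 ha hay.le (by abel)
    have heL : e ≤ L := by
      rw [hL]
      calc e = 1 • e := (one_nsmul e).symm
      _ ≤ (m+1) • e := sm_le he.le (by omega)
    have hfuel : (2*(m+2)) • e ≤ (2^4) • c := by
      have s1 : (2*(m+2)) • e ≤ ((m+1)*4) • e := sm_le he.le (by omega)
      have s2 : ((m+1)*4) • e = 4 • ((m+1) • e) := mul_nsmul e (m+1) 4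
      have s3 : 4 • ((m+1) • e) ≤ 4 • (c + c) := by
        apply em_le
        rw [← hL]; exact hLb.le
      have s4 : (4:ℕ) • (c + c) = 8 • c := by
        rw [nsmul_add, ← add_nsmul]
      have s5 : (8:ℕ) • c ≤ (2^4) • c := sm_le hc0 (by norm_num)
      calc (2*(m+2)) • e ≤ ((m+1)*4) • e := s1
        _ = 4 • ((m+1) • e) := s2
        _ ≤ 4 • (c + c) := s3
        _ = 8 • c := s4
        _ ≤ (2^4) • c := s5
    have hlow : -(2 • c) ≤ y - e := by
      rw [two_nsmul]
      exact wle4 hay.le ha hLb.le heL (by abel)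
    have hhigh : y + (m+1) • e < 2 • c := by
      rw [two_nsmul, ← hL]
      exact lt_of_lt_of_le hyb hb2
    obtain ⟨x, hx⟩ := ind m hball 4 e y he hfuel hlow hhigh
    rw [← hL] at hx
    exact ⟨x, lt_of_lt_of_le hay hx.1, lt_of_le_of_lt hx.2 hyb⟩

end RegAux

/-- `RegSet G n` is a convex subgroup of `G`. -/
theorem stmt_3 (G : Type*) [AddCommGroup G] [LinearOrder G] [IsOrderedAddMonoid G] (n : ℕ) (hn : 1 ≤ n) :
    ∃ H : AddSubgroup G,
      (H : Set G) = RegSet G n ∧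
      ∀ x ∈ H, ∀ x' ∈ H, ∀ y : G, x < y → y < x' → y ∈ H := by
  classical
  refine ⟨⟨⟨⟨RegSet G n, ?_⟩, ?_⟩, ?_⟩, rfl, ?_⟩
  · -- add_mem
    intro g h hg hh
    exact RegAux.regset_add hn hg hh
  · intro a b ha hab hb hpts
    obtain ⟨f, hf⟩ := hpts
    exfalso
    have h1 := hf ⟨0, hn⟩
    have hb0 : b ≤ 0 := by rwa [abs_zero] at hb
    exact absurd (lt_trans h1.1 h1.2) (not_lt.mpr (le_trans hb0 ha))
  · intro g hg
    exact RegAux.mono (le_of_eq (abs_neg g)) hg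
  · intro x hx x' hx' t hxt htx'
    have hx2 : x ∈ RegSet G n := hx
    have hx2' : x' ∈ RegSet G n := hx'
    have habs : |t| ≤ |x| ⊔ |x'| := by
      rw [abs_le]
      constructor
      · calc -(|x| ⊔ |x'|) ≤ -|x| := neg_le_neg (le_max_left _ _)
          _ ≤ x := neg_abs_le x
          _ ≤ t := hxt.le
      · calc t ≤ x' := htx'.le
          _ ≤ |x'| := le_abs_self x'
          _ ≤ |x| ⊔ |x'| := le_max_right _ _
    show t ∈ RegSet G n
    rcases le_total |x| |x'| with h1 | h1
    · exact RegAux.mono (le_trans habs (max_le h1 le_rfl)) hx2'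
    · exact RegAux.mono (le_trans habs (max_le le_rfl h1)) hx2
end

section
/- Let Z be a discrete ordered abelian group with least positive element 1_Z, let O = {k·1_Z : k ∈ ℤ}, and suppose Z is not n-regular for some integer n ≥ 1. Let H be the set of all g in Z such that every open interval (a,b) with 0 ≤ a ≤ b ≤ |g| containing at least n elements contains an element divisible by n. Then H is a convex subgroup of Z with O ⊆ H and H ≠ Z; in particular H is a nontrivial convex subgroup of Z. -/
/-- `G` is `n`-regular: every open interval containing at least `n` elements contains
an element divisible by `n`. -/
def NRegular (G : Type*) [AddCommGroup G] [LinearOrder G] [IsOrderedAddMonoid G] (n : ℕ) : Prop :=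
  ∀ a b : G, (∃ f : Fin n ↪ G, ∀ i, f i ∈ Set.Ioo a b) → ∃ x : G, n • x ∈ Set.Ioo a b

section Aux
variable {Z : Type*} [AddCommGroup Z] [LinearOrder Z] [IsOrderedAddMonoid Z] {one : Z}

/-- Discreteness: `x < y` implies `x + 1 ≤ y`. -/
lemma dsucc (h1 : IsLeast {x : Z | 0 < x} one) {x y : Z} (h : x < y) : x + one ≤ y := by
  have h2 : one ≤ y - x := h1.2 (sub_pos.mpr h)
  rw [le_sub_iff_add_le, add_comm] at h2
  exact h2

/-- Elements in `[0, m·1)` are multiples of `1`. -/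
lemma finite_interval (h1 : IsLeast {x : Z | 0 < x} one) :
    ∀ (m : ℕ) {z : Z}, 0 ≤ z → z < m • one → ∃ k : ℕ, k < m ∧ z = k • one := by
  intro m
  induction m with
  | zero =>
    intro z hz hzm
    simp only [zero_smul] at hzm
    exact absurd (lt_of_le_of_lt hz hzm) (lt_irrefl 0)
  | succ m ih =>
    intro z hz hzm
    rcases eq_or_lt_of_le hz with h0 | h0
    · exact ⟨0, Nat.succ_pos m, by simp [← h0]⟩
    · have hone : one ≤ z := h1.2 h0
      have hz' : (0:Z) ≤ z - one := sub_nonneg.mpr hone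
      have hzm' : z - one < m • one := by
        rw [sub_lt_iff_lt_add]
        rw [succ_nsmul one m] at hzm
        exact hzm
      obtain ⟨k, hk, hke⟩ := ih hz' hzm'
      refine ⟨k+1, by omega, ?_⟩
      rw [succ_nsmul one k, ← hke, sub_add_cancel]

lemma zsmul_lt_zsmul' (h1 : IsLeast {x : Z | 0 < x} one) {p q : ℤ} (h : p < q) :
    p • one < q • one := by
  have hpos : 0 < (q - p) • one := zsmul_pos h1.1 (by omega)
  have heq : q • one = p • one + (q - p) • one := by rw [← add_zsmul]; ring_nf
  rw [heq]; exact lt_add_of_pos_right _ hpos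

/-- `n` distinct points in an open interval force a gap of more than `n·1`. -/
lemma points_imp_gap (h1 : IsLeast {x : Z | 0 < x} one) {n : ℕ} (hn : 1 ≤ n) {a b : Z}
    (h : ∃ f : Fin n ↪ Z, ∀ i, f i ∈ Set.Ioo a b) : a + n • one < b := by
  by_contra hc
  push_neg at hc
  obtain ⟨f, hf⟩ := h
  have key : ∀ i : Fin n, ∃ k : ℕ, k < n ∧ f i - a = k • one := by
    intro i
    apply finite_interval h1 n (le_of_lt (sub_pos.mpr (hf i).1))
    have h2 : f i < a + n • one := lt_of_lt_of_le (hf i).2 hc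
    rwa [sub_lt_iff_lt_add, add_comm]
  choose g hg1 hg2 using key
  have hGinj : Function.Injective (fun i : Fin n => (⟨g i, hg1 i⟩ : Fin n)) := by
    intro i j hij
    apply f.injective
    have hgij : g i = g j := congrArg Fin.val hij
    have := hg2 i
    rw [hgij, ← hg2 j] at this
    exact sub_left_injective this
  obtain ⟨i, hi⟩ := Finite.surjective_of_injective hGinj ⟨0, hn⟩
  have h0 : g i = 0 := congrArg Fin.val hi
  have := hg2 i
  rw [h0, zero_smul, sub_eq_zero] at this
  exact absurd (hf i).1 (by rw [this]; exact lt_irrefl a)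

/-- Conversely, a gap of more than `n·1` yields `n` distinct points. -/
lemma gap_imp_points (h1 : IsLeast {x : Z | 0 < x} one) {n : ℕ} {a b : Z}
    (h : a + n • one < b) : ∃ f : Fin n ↪ Z, ∀ i, f i ∈ Set.Ioo a b := by
  have hmono : StrictMono (fun k : ℕ => a + k • one) := by
    intro p q hpq
    simp only [add_lt_add_iff_left]
    exact nsmul_lt_nsmul_left h1.1 hpq
  refine ⟨⟨fun i => a + ((i : ℕ) + 1) • one, ?_⟩, ?_⟩
  · intro i j hij
    have := hmono.injective (hij : a + ((i:ℕ)+1) • one = a + ((j:ℕ)+1) • one)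
    ext; omega
  · intro i
    constructor
    · show a < a + ((i:ℕ)+1) • one
      simp only [lt_add_iff_pos_right]
      exact nsmul_pos h1.1 (by omega)
    · show a + ((i:ℕ)+1) • one < b
      calc a + ((i:ℕ)+1) • one ≤ a + n • one := by
            simp only [add_le_add_iff_left]
            exact nsmul_le_nsmul_left h1.1.le (by omega)
        _ < b := h

/-- Windows with endpoints in `O` always contain a multiple of `n`. -/
lemma winB (h1 : IsLeast {x : Z | 0 < x} one) {n : ℕ} (hn : 1 ≤ n) (k : ℤ) :
    ∃ x : Z, n • x ∈ Set.Ioo (k • one) (k • one + (n+1) • one) := by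
  have hn0 : (0:ℤ) < (n:ℤ) := by exact_mod_cast hn
  set t : ℤ := (k + n) / n with ht
  refine ⟨t • one, ?_⟩
  have hsm : n • (t • one) = ((n:ℤ) * t) • one := by
    rw [mul_zsmul, natCast_zsmul]
  have hmod1 : 0 ≤ (k + n) % n := Int.emod_nonneg _ (by omega)
  have hmod2 : (k + n) % n < n := Int.emod_lt_of_pos _ hn0
  have hdm : (n:ℤ) * t + (k + n) % n = k + n := Int.mul_ediv_add_emod _ _
  have key1 : k < (n:ℤ) * t := by omega
  have key2 : (n:ℤ) * t < k + n + 1 := by omega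
  constructor
  · rw [hsm]; exact zsmul_lt_zsmul' h1 key1
  · rw [hsm]
    have hcast : ((n+1:ℕ)) • one = ((n:ℤ) + 1) • one := by
      rw [← natCast_zsmul]; norm_cast
    have : k • one + (n+1:ℕ) • one = (k + n + 1) • one := by
      rw [hcast, ← add_zsmul]
      congr 1
      ring
    rw [this]
    exact zsmul_lt_zsmul' h1 key2

/-- If a multiple of `n` lies at most `m·n·1` below the top of a window of `n`
consecutive elements, the window contains a multiple of `n`. -/
lemma winA (h1 : IsLeast {x : Z | 0 < x} one) {n : ℕ} :
    ∀ (m : ℕ) {c u : Z}, (∃ x : Z, n • x = c) → u - (m * n) • one < c →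
      c < u + (n+1) • one → ∃ x : Z, n • x ∈ Set.Ioo u (u + (n+1) • one) := by
  intro m
  induction m with
  | zero =>
    intro c u hc hlo hhi
    obtain ⟨x, rfl⟩ := hc
    simp only [Nat.zero_mul, zero_smul, sub_zero] at hlo
    exact ⟨x, hlo, hhi⟩
  | succ m ih =>
    intro c u hc hlo hhi
    by_cases hcu : u - (m * n) • one < c
    · exact ih hc hcu hhi
    · push_neg at hcu
      obtain ⟨x, rfl⟩ := hc
      apply ih (c := n • x + n • one) ⟨x + one, by rw [smul_add]⟩
      · have hexp : ((m+1) * n) • one = (m * n) • one + n • one := by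
          rw [← add_nsmul]; ring_nf
        have hlo' : u - (m*n) • one - n • one < n • x := by
          rw [hexp, ← sub_sub] at hlo; exact hlo
        exact sub_lt_iff_lt_add.mp hlo'
      · have h2 : n • x ≤ u := le_trans hcu (sub_le_self _ (nsmul_nonneg h1.1.le _))
        calc n • x + n • one ≤ u + n • one := add_le_add_left h2 _
          _ < u + (n+1) • one := by
              apply add_lt_add_right
              rw [succ_nsmul]
              exact lt_add_of_pos_right _ h1.1

/-- `WinReg one n M`: every window of `n` consecutive elements inside `[0, M]`
contains a multiple of `n`. -/
def WinReg (one : Z) (n : ℕ) (M : Z) : Prop :=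
  ∀ u : Z, 0 ≤ u → u + (n+1) • one ≤ M → ∃ x : Z, n • x ∈ Set.Ioo u (u + (n+1) • one)

lemma winMono {n : ℕ} {M M' : Z} (h : M' ≤ M) (hq : WinReg one n M) : WinReg one n M' :=
  fun u hu hub => hq u hu (le_trans hub h)

/-- The key closure property: `WinReg` is closed under addition of bounds. -/
lemma winQ_add (h1 : IsLeast {x : Z | 0 < x} one) {n : ℕ} (hn : 1 ≤ n) {M N : Z}
    (hNM : N ≤ M) (hMq : WinReg one n M) (hNq : WinReg one n N) :
    WinReg one n (M + N) := by
  set W : Z := (n+1) • one with hW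
  have hWpos : 0 < W := nsmul_pos h1.1 (by omega)
  intro u hu hub
  by_cases hc1 : u + W ≤ M
  · exact hMq u hu hc1
  push_neg at hc1
  by_cases hMs : M < W
  · have hu2 : u < W := by
      have e1 : u + W ≤ M + M := le_trans hub (add_le_add_right hNM M)
      have e2 : u + W < W + W := lt_of_le_of_lt e1 (add_lt_add hMs hMs)
      exact (add_lt_add_iff_right W).mp e2
    obtain ⟨k, hk, rfl⟩ := finite_interval h1 (n+1) hu hu2
    obtain ⟨x, hx⟩ := winB h1 hn (k : ℤ)
    refine ⟨x, ?_⟩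
    rwa [natCast_zsmul] at hx
  push_neg at hMs
  obtain ⟨c, hc⟩ := hMq (M - W) (sub_nonneg.mpr hMs) (by rw [sub_add_cancel])
  rw [sub_add_cancel] at hc
  by_cases huM : u ≤ M
  · apply winA h1 (n+1) ⟨c, rfl⟩
    · have e1 : u - ((n+1)*n) • one ≤ u - W :=
        sub_le_sub_left (nsmul_le_nsmul_left h1.1.le (Nat.le_mul_of_pos_right (n+1) hn)) u
      have e2 : u - W ≤ M - W := sub_le_sub_right huM W
      exact lt_of_le_of_lt (le_trans e1 e2) hc.1
    · exact lt_of_lt_of_le hc.2 hc1.le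
  · push_neg at huM
    have huM' : M + one ≤ u := dsucc h1 huM
    have harg1 : (0:Z) ≤ u - M - one := by
      have : one ≤ u - M := le_sub_iff_add_le.mpr (by rwa [add_comm] at huM')
      exact sub_nonneg.mpr this
    have harg2 : u - M - one + W ≤ N := by
      have e : u - M - one + W = (u + W) - M - one := by abel
      rw [e]
      calc (u + W) - M - one ≤ (M + N) - M - one := by
            apply sub_le_sub_right; exact sub_le_sub_right hub M
        _ = N - one := by abel
        _ ≤ N := sub_le_self N h1.1.le
    obtain ⟨d, hd⟩ := hNq (u - M - one) harg1 harg2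
    apply winA h1 (n+2) ⟨c + d, smul_add n c d⟩
    · have l3 : (n+2) • one ≤ ((n+2)*n) • one :=
        nsmul_le_nsmul_left h1.1.le (Nat.le_mul_of_pos_right (n+2) hn)
      have l4 : (n+2) • one = W + one := by rw [hW, succ_nsmul]
      calc u - ((n+2)*n) • one ≤ u - (W + one) := sub_le_sub_left (l4 ▸ l3) u
        _ = (M - W) + (u - M - one) := by abel
        _ < n • c + n • d := add_lt_add hc.1 hd.1
    · calc n • c + n • d < M + (u - M - one + W) := add_lt_add hc.2 hd.2
        _ = u + W - one := by abel
        _ < u + W := sub_lt_self _ h1.1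

/-- Membership in `RegSet` is equivalent to the window condition on `|g|`. -/
lemma regset_iff (h1 : IsLeast {x : Z | 0 < x} one) {n : ℕ} (hn : 1 ≤ n) (g : Z) :
    g ∈ RegSet Z n ↔ WinReg one n |g| := by
  have hWpos : 0 < (n+1) • one := nsmul_pos h1.1 (by omega)
  constructor
  · intro hg u hu hub
    apply hg u (u + (n+1) • one) hu (le_add_of_nonneg_right hWpos.le) hub
    apply gap_imp_points h1
    apply add_lt_add_right
    exact nsmul_lt_nsmul_left h1.1 (by omega)
  · intro hq a b ha hab hb hpts
    have hgap := points_imp_gap h1 hn hpts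
    have hgap' : a + n • one + one ≤ b := dsucc h1 hgap
    have hWle : a + (n+1) • one ≤ b := by
      rw [succ_nsmul, ← add_assoc]
      exact hgap'
    obtain ⟨x, hx⟩ := hq a ha (le_trans hWle hb)
    exact ⟨x, hx.1, lt_of_lt_of_le hx.2 hWle⟩

end Aux

/-- If a discrete ordered abelian group `Z` is not `n`-regular, then `RegSet Z n` is a
nontrivial convex subgroup containing `O = {k • 1_Z : k ∈ ℤ}`. -/
theorem stmt_4 (Z : Type*) [AddCommGroup Z] [LinearOrder Z] [IsOrderedAddMonoid Z] (one : Z)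
    (h1 : IsLeast {x : Z | 0 < x} one) (n : ℕ) (hn : 1 ≤ n) (hreg : ¬ NRegular Z n) :
    ∃ H : AddSubgroup Z,
      (H : Set Z) = RegSet Z n ∧
      (∀ x ∈ H, ∀ x' ∈ H, ∀ y : Z, x < y → y < x' → y ∈ H) ∧
      (Set.range fun k : ℤ => k • one) ⊆ (H : Set Z) ∧
      H ≠ ⊤ ∧ H ≠ ⊥ := by
  have hWpos : 0 < (n+1) • one := nsmul_pos h1.1 (by omega)
  -- all elements of `O` satisfy the window condition
  have hO : ∀ k : ℤ, WinReg one n |k • one| := by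
    intro k u hu hub
    have habs : |k • one| = k.natAbs • one := by
      rw [abs_zsmul, abs_of_pos h1.1, Int.abs_eq_natAbs, natCast_zsmul]
    rw [habs] at hub
    have hlt : u < k.natAbs • one :=
      lt_of_lt_of_le (lt_add_of_pos_right u hWpos) hub
    obtain ⟨j, hj, rfl⟩ := finite_interval h1 k.natAbs hu hlt
    obtain ⟨x, hx⟩ := winB h1 hn (j : ℤ)
    exact ⟨x, by rwa [natCast_zsmul] at hx⟩
  let H : AddSubgroup Z :=
    { carrier := RegSet Z n
      zero_mem' := by
        apply (regset_iff h1 hn 0).mpr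
        intro u hu hub
        exfalso
        have h0 : u + (n+1) • one ≤ 0 := by simpa using hub
        have hpos : 0 < u + (n+1) • one :=
          lt_of_lt_of_le hWpos (le_add_of_nonneg_left hu)
        exact absurd h0 (not_le.mpr hpos)
      add_mem' := by
        intro a b ha hb
        apply (regset_iff h1 hn _).mpr
        have ha' := (regset_iff h1 hn a).mp ha
        have hb' := (regset_iff h1 hn b).mp hb
        rcases le_total |a| |b| with h | h
        · exact winMono (le_trans (abs_add_le a b) (le_of_eq (add_comm _ _)))
            (winQ_add h1 hn h hb' ha')
        · exact winMono (abs_add_le a b) (winQ_add h1 hn h ha' hb')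
      neg_mem' := by
        intro a ha
        apply (regset_iff h1 hn _).mpr
        rw [abs_neg]
        exact (regset_iff h1 hn a).mp ha }
  have hHmem : ∀ g : Z, g ∈ H ↔ WinReg one n |g| := fun g => regset_iff h1 hn g
  refine ⟨H, rfl, ?_, ?_, ?_, ?_⟩
  · -- convexity
    intro x hx x' hx' y hxy hyx'
    have hy1 : y ≤ |x'| := le_trans hyx'.le (le_abs_self x')
    have hy2 : -y ≤ |x| := le_trans (neg_le_neg hxy.le) (neg_le_abs x)
    have hmax : |y| ≤ max |x| |x'| :=
      abs_le.mpr ⟨neg_le.mp (hy2.trans (le_max_left _ _)), hy1.trans (le_max_right _ _)⟩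
    apply (hHmem y).mpr
    rcases max_cases |x| |x'| with ⟨he, _⟩ | ⟨he, _⟩
    · rw [he] at hmax
      exact winMono hmax ((hHmem x).mp hx)
    · rw [he] at hmax
      exact winMono hmax ((hHmem x').mp hx')
  · -- O ⊆ H
    rintro z ⟨k, rfl⟩
    exact (hHmem _).mpr (hO k)
  · -- H ≠ ⊤
    intro htop
    apply hreg
    intro a b hpts
    have hall : ∀ g : Z, WinReg one n |g| := by
      intro g
      exact (hHmem g).mp (htop ▸ AddSubgroup.mem_top g)
    have hgap := points_imp_gap h1 hn hpts
    have hgap' : a + (n+1) • one ≤ b := by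
      rw [succ_nsmul, ← add_assoc]
      exact dsucc h1 hgap
    rcases le_or_gt 0 a with ha | ha
    · obtain ⟨x, hx⟩ := hall b a ha (hgap'.trans (le_abs_self b))
      exact ⟨x, hx.1, lt_of_lt_of_le hx.2 hgap'⟩
    rcases le_or_gt b 0 with hb | hb
    · have h2 : -b + (n+1) • one ≤ -a := by
        have e : -b + (n+1) • one = -(b - (n+1) • one) := by abel
        rw [e, neg_le_neg_iff]
        exact le_sub_iff_add_le.mpr hgap'
      obtain ⟨x, hx⟩ := hall a (-b) (neg_nonneg.mpr hb) (h2.trans (neg_le_abs a))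
      refine ⟨-x, ?_, ?_⟩
      · have h3 := neg_lt_neg (lt_of_lt_of_le hx.2 h2)
        rw [neg_neg] at h3
        rw [smul_neg]
        exact h3
      · have h3 := neg_lt_neg hx.1
        rw [neg_neg] at h3
        rw [smul_neg]
        exact h3
    · exact ⟨0, by simpa using ⟨ha, hb⟩⟩
  · -- H ≠ ⊥
    intro hbot
    have h1Z := hO 1
    rw [one_zsmul] at h1Z
    have hone : one ∈ H := (hHmem one).mpr h1Z
    rw [hbot] at hone
    exact absurd (AddSubgroup.mem_bot.mp hone) (ne_of_gt h1.1)
end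

section
/- Every eventually periodic subset of ℤ is definable with parameters in the structure (ℤ,<,+), viewed as a structure in the language of ordered abelian groups. -/
open FirstOrder

/-- Function symbols of the language of ordered abelian groups:
a constant `0`, a unary `-`, and a binary `+`. -/
inductive OagFunc : ℕ → Type
  | zero : OagFunc 0
  | neg : OagFunc 1
  | add : OagFunc 2

/-- Relation symbols of the language of ordered abelian groups: a binary `<`. -/
inductive OagRel : ℕ → Type
  | lt : OagRel 2

/-- The language of ordered abelian groups. -/
def Log : FirstOrder.Language := ⟨OagFunc, OagRel⟩

/-- Every linearly ordered abelian group is an `Log`-structure in the natural way. -/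
instance (G : Type*) [AddCommGroup G] [LinearOrder G] [IsOrderedAddMonoid G] : Log.Structure G where
  funMap {_} f x :=
    match f with
    | OagFunc.zero => 0
    | OagFunc.neg => -(x 0)
    | OagFunc.add => x 0 + x 1
  RelMap {_} r x :=
    match r with
    | OagRel.lt => x 0 < x 1

open FirstOrder.Language

abbrev Lz := Log[[(Set.univ : Set ℤ)]]

def cT {α : Type} (a : ℤ) : Lz.Term α := (Language.con Log (⟨a, trivial⟩ : (Set.univ : Set ℤ))).term

def addT {α : Type} (t s : Lz.Term α) : Lz.Term α :=
  Term.func (Sum.inl OagFunc.add) ![t, s]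

def smulT {α : Type} : ℕ → Lz.Term α → Lz.Term α
  | 0, _ => cT 0
  | k + 1, t => addT t (smulT k t)

@[simp] lemma realize_cT {α : Type} (a : ℤ) (v : α → ℤ) : (cT (α := α) a).realize v = a := by
  simp [cT, Term.realize_con]

@[simp] lemma realize_addT {α : Type} (t s : Lz.Term α) (v : α → ℤ) :
    (addT t s).realize v = t.realize v + s.realize v := by
  simp only [addT, Term.realize_func]; rfl

@[simp] lemma realize_smulT {α : Type} (k : ℕ) (t : Lz.Term α) (v : α → ℤ) :
    (smulT k t).realize v = (k : ℤ) * t.realize v := by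
  induction k with
  | zero => simp [smulT]
  | succ k ih => simp [smulT, ih]; ring

/-- abbreviation for 1-definability over ℤ with all parameters -/
abbrev DD (s : Set ℤ) : Prop := Set.Definable₁ (Set.univ : Set ℤ) Log s

lemma DD.union {s t : Set ℤ} (hs : DD s) (ht : DD t) : DD (s ∪ t) := by
  exact Set.Definable.union hs ht

lemma DD.inter {s t : Set ℤ} (hs : DD s) (ht : DD t) : DD (s ∩ t) := by
  exact Set.Definable.inter hs ht

lemma DD.compl {s : Set ℤ} (hs : DD s) : DD sᶜ := by
  exact Set.Definable.compl hs

lemma DD.empty : DD (∅ : Set ℤ) := Set.definable_empty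

lemma DD.univ : DD (Set.univ : Set ℤ) := Set.definable_univ

lemma DD.biUnion {ι : Type} (F : Finset ι) (f : ι → Set ℤ) (hf : ∀ i, DD (f i)) :
    DD (⋃ i ∈ F, f i) := by
  have : {x : Fin 1 → ℤ | x 0 ∈ ⋃ i ∈ F, f i} = ⋃ i ∈ F, {x : Fin 1 → ℤ | x 0 ∈ f i} := by
    ext x; simp
  show Set.Definable _ _ _
  rw [this]; exact Set.definable_biUnion_finset (fun i => hf i) F

lemma DD.prop (p : Prop) : DD {x : ℤ | p} := by
  by_cases hp : p
  · have : {x : ℤ | p} = Set.univ := by ext; simp [hp]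
    rw [this]; exact DD.univ
  · have : {x : ℤ | p} = ∅ := by ext; simp [hp]
    rw [this]; exact DD.empty

lemma DD.lt_const (a : ℤ) : DD {x : ℤ | x < a} := by
  refine ⟨Relations.boundedFormula₂ (Sum.inl OagRel.lt) (Term.var (Sum.inl 0)) (cT a), ?_⟩
  ext v
  simp only [Set.mem_setOf_eq, Formula.Realize, BoundedFormula.realize_rel₂]
  constructor
  · intro h; exact h
  · intro h; exact h

lemma DD.le_const (a : ℤ) : DD {x : ℤ | a ≤ x} := by
  have : {x : ℤ | a ≤ x} = {x : ℤ | x < a}ᶜ := by ext x; simp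
  rw [this]; exact (DD.lt_const a).compl

@[simp] lemma snoc_zero' (y : ℤ) (i : Fin 1) :
    (Fin.snoc (default : Fin 0 → ℤ) y : Fin 1 → ℤ) i = y := by
  rw [Subsingleton.elim i (Fin.last 0), Fin.snoc_last]

lemma DD.dvd_sub (d : ℕ) (a : ℤ) : DD {x : ℤ | (d : ℤ) ∣ x - a} := by
  refine ⟨BoundedFormula.ex
    (Term.bdEqual (Term.var (Sum.inl 0))
      (addT (smulT d (Term.var (Sum.inr 0))) (cT a))), ?_⟩
  ext v
  simp only [Set.mem_setOf_eq, Formula.Realize, BoundedFormula.realize_ex,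
    BoundedFormula.realize_bdEqual, Term.realize_var, realize_addT, realize_smulT, realize_cT]
  simp only [Sum.elim_inl, Sum.elim_inr, Fin.isValue]
  constructor
  · rintro ⟨y, hy⟩
    refine ⟨y, ?_⟩
    show v 0 = (d : ℤ) * y + a
    linarith
  · rintro ⟨y, hy⟩
    have hy' : v 0 = (d : ℤ) * y + a := hy
    exact ⟨y, by linarith⟩

/-- `A ⊆ ℤ` is eventually periodic. -/
def EvPeriodic (A : Set ℤ) : Prop :=
  ∃ n : ℤ, 0 < n ∧ ∃ m m' : ℤ,
    (∀ k : ℤ, m ≤ k → (k ∈ A ↔ k + n ∈ A)) ∧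
    (∀ k : ℤ, k ≤ m' → (k ∈ A ↔ k - n ∈ A))

/-- Every eventually periodic subset of `ℤ` is definable with parameters in `(ℤ,<,+)`. -/
theorem stmt_13 (A : Set ℤ) (h : EvPeriodic A) :
    Set.Definable₁ (Set.univ : Set ℤ) Log A := by
  obtain ⟨n, hn, m, m', hup, hdn⟩ := h
  -- iterated periodicity upward
  have up : ∀ (j : ℕ) (k : ℤ), m ≤ k → (k ∈ A ↔ k + j * n ∈ A) := by
    intro j
    induction j with
    | zero => intro k _; simp
    | succ j ih =>
      intro k hk
      have hjn : 0 ≤ (j : ℤ) * n := mul_nonneg (by positivity) hn.le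
      have h2 := hup (k + j * n) (by linarith)
      have he : k + ((j : ℕ) + 1 : ℤ) * n = (k + j * n) + n := by ring
      rw [show ((j + 1 : ℕ) : ℤ) = (j : ℤ) + 1 by push_cast; ring, he]
      exact (ih k hk).trans h2
  have dn : ∀ (j : ℕ) (k : ℤ), k ≤ m' → (k ∈ A ↔ k - j * n ∈ A) := by
    intro j
    induction j with
    | zero => intro k _; simp
    | succ j ih =>
      intro k hk
      have hjn : 0 ≤ (j : ℤ) * n := mul_nonneg (by positivity) hn.le
      have h2 := hdn (k - j * n) (by linarith)
      have he : k - ((j : ℕ) + 1 : ℤ) * n = (k - j * n) - n := by ring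
      rw [show ((j + 1 : ℕ) : ℤ) = (j : ℤ) + 1 by push_cast; ring, he]
      exact (ih k hk).trans h2
  -- reduction to canonical representatives
  have red : ∀ x : ℤ, m ≤ x → (x ∈ A ↔ m + (x - m) % n ∈ A) := by
    intro x hx
    have hq : 0 ≤ (x - m) / n := Int.ediv_nonneg (by linarith) hn.le
    have hr : 0 ≤ (x - m) % n := Int.emod_nonneg _ hn.ne'
    have hde := Int.mul_ediv_add_emod (x - m) n
    have hx' : x = (m + (x - m) % n) + ((x - m) / n).toNat * n := by
      rw [Int.toNat_of_nonneg hq]; linarith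
    have := up ((x - m) / n).toNat (m + (x - m) % n) (by linarith)
    rw [← hx'] at this
    exact this.symm
  have red' : ∀ x : ℤ, x ≤ m' → (x ∈ A ↔ m' - (m' - x) % n ∈ A) := by
    intro x hx
    have hq : 0 ≤ (m' - x) / n := Int.ediv_nonneg (by linarith) hn.le
    have hr : 0 ≤ (m' - x) % n := Int.emod_nonneg _ hn.ne'
    have hde := Int.mul_ediv_add_emod (m' - x) n
    have hx' : x = (m' - (m' - x) % n) - ((m' - x) / n).toNat * n := by
      rw [Int.toNat_of_nonneg hq]; linarith
    have := dn ((m' - x) / n).toNat (m' - (m' - x) % n)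
      (by have : 0 ≤ (m' - x) % n := hr; linarith)
    rw [← hx'] at this
    exact this.symm
  have upcong : ∀ x k : ℤ, m ≤ x → m ≤ k → n ∣ x - k → (x ∈ A ↔ k ∈ A) := by
    intro x k hx hk hd
    have hmol : (x - m) % n = (k - m) % n := by
      have : x ≡ k [ZMOD n] := (Int.modEq_iff_dvd.2 hd).symm
      exact (this.sub_right m)
    rw [red x hx, red k hk, hmol]
  have dncong : ∀ x k : ℤ, x ≤ m' → k ≤ m' → n ∣ x - k → (x ∈ A ↔ k ∈ A) := by
    intro x k hx hk hd
    have hmol : (m' - x) % n = (m' - k) % n := by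
      have : x ≡ k [ZMOD n] := (Int.modEq_iff_dvd.2 hd).symm
      exact ((Int.ModEq.refl m').sub this)
    rw [red' x hx, red' k hk, hmol]
  set N := n.toNat with hN
  have hNn : (N : ℤ) = n := Int.toNat_of_nonneg hn.le
  -- decomposition
  have hdecomp : A =
      (⋃ r ∈ Finset.range N,
        ({x : ℤ | m ≤ x} ∩ {x : ℤ | (N : ℤ) ∣ x - (m + r)} ∩ {x : ℤ | (m + (r : ℤ)) ∈ A})) ∪
      (⋃ r ∈ Finset.range N,
        ({x : ℤ | x < m' + 1} ∩ {x : ℤ | (N : ℤ) ∣ x - (m' - r)} ∩ {x : ℤ | (m' - (r : ℤ)) ∈ A})) ∪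
      (⋃ k ∈ Finset.Ioo m' m,
        (({x : ℤ | k ≤ x} ∩ {x : ℤ | x < k + 1}) ∩ {x : ℤ | k ∈ A})) := by
    ext x
    simp only [Set.mem_union, Set.mem_iUnion, Set.mem_inter_iff, Set.mem_setOf_eq,
      Finset.mem_range, Finset.mem_Ioo, exists_prop]
    constructor
    · intro hx
      by_cases hm : m ≤ x
      · left; left
        have hr0 : 0 ≤ (x - m) % n := Int.emod_nonneg _ hn.ne'
        have hrn : (x - m) % n < n := Int.emod_lt_of_pos _ hn
        refine ⟨((x - m) % n).toNat, by omega, ⟨hm, ?_⟩, ?_⟩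
        · rw [hNn, Int.toNat_of_nonneg hr0]
          have hde := Int.mul_ediv_add_emod (x - m) n
          exact ⟨(x - m) / n, by linarith⟩
        · rw [Int.toNat_of_nonneg hr0]
          exact (red x hm).mp hx
      · by_cases hm' : x ≤ m'
        · left; right
          have hr0 : 0 ≤ (m' - x) % n := Int.emod_nonneg _ hn.ne'
          have hrn : (m' - x) % n < n := Int.emod_lt_of_pos _ hn
          refine ⟨((m' - x) % n).toNat, by omega, ⟨by omega, ?_⟩, ?_⟩
          · rw [hNn, Int.toNat_of_nonneg hr0]
            have hde := Int.mul_ediv_add_emod (m' - x) n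
            exact ⟨-((m' - x) / n), by linarith⟩
          · rw [Int.toNat_of_nonneg hr0]
            exact (red' x hm').mp hx
        · right
          exact ⟨x, ⟨by omega, by omega⟩, ⟨le_refl x, by omega⟩, hx⟩
    · rintro ((⟨r, hrN, ⟨hmx, hdvd⟩, hmem⟩ | ⟨r, hrN, ⟨hmx, hdvd⟩, hmem⟩) |
        ⟨k, _, ⟨hk1, hk2⟩, hmem⟩)
      · rw [hNn] at hdvd
        exact (upcong x (m + r) hmx (by omega) hdvd).mpr hmem
      · rw [hNn] at hdvd
        exact (dncong x (m' - r) (by omega) (by omega) hdvd).mpr hmem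
      · have : x = k := by omega
        rwa [this]
  rw [hdecomp]
  refine DD.union (DD.union ?_ ?_) ?_
  · exact DD.biUnion _ _ (fun r =>
      DD.inter (DD.inter (DD.le_const m) (DD.dvd_sub N (m + r))) (DD.prop _))
  · exact DD.biUnion _ _ (fun r =>
      DD.inter (DD.inter (DD.lt_const (m' + 1)) (DD.dvd_sub N (m' - r))) (DD.prop _))
  · exact DD.biUnion _ _ (fun k =>
      DD.inter (DD.inter (DD.le_const k) (DD.lt_const (k + 1))) (DD.prop _))
end

section
/- Let Z be a discrete ordered abelian group with least positive element 1_Z and O = {k·1_Z : k ∈ ℤ}. Let A ⊆ O be such that the set {k ∈ ℤ : k·1_Z ∈ A} is an eventually periodic subset of ℤ. Then there is a subset B of Z, definable with parameters in the language of ordered abelian groups, such that A = B ∩ O. -/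
open FirstOrder

section Helpers

variable {Z : Type} [AddCommGroup Z] [LinearOrder Z] [IsOrderedAddMonoid Z]

lemma funMap_add (x : Fin 2 → Z) :
    Language.Structure.funMap (L := Log) OagFunc.add x = x 0 + x 1 := rfl

lemma relMap_lt (x : Fin 2 → Z) :
    Language.Structure.RelMap (L := Log) OagRel.lt x ↔ x 0 < x 1 := Iff.rfl

/-- term for `n • t` (for `n ≥ 1`; at 0 it's `t`... define as (n+1)•?) -/
def nsmulT {β : Type} (n : ℕ) (t : Log.Term β) : Log.Term β :=
  Nat.rec t (fun _ s => Language.Term.func (L := Log) OagFunc.add ![t, s]) n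

lemma realize_nsmulT {β : Type} (n : ℕ) (t : Log.Term β) (v : β → Z) :
    (nsmulT n t).realize v = (n + 1) • (t.realize v) := by
  induction n with
  | zero => simp [nsmulT]
  | succ n ih =>
    show (Language.Term.func (L := Log) OagFunc.add ![t, nsmulT n t]).realize v = _
    erw [Language.Term.realize_func, funMap_add]
    simp [ih, add_nsmul]
    abel

end Helpers

section Defs

variable {Z : Type} [AddCommGroup Z] [LinearOrder Z] [IsOrderedAddMonoid Z]

/-- variable term for parameter -/
def pT (c : Z) : Log.Term ((↥(Set.univ : Set Z) ⊕ Fin 1) ⊕ Fin 1) :=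
  Language.Term.var (Sum.inl (Sum.inl ⟨c, trivial⟩))

def xT : Log.Term ((↥(Set.univ : Set Z) ⊕ Fin 1) ⊕ Fin 1) :=
  Language.Term.var (Sum.inl (Sum.inr 0))

def yT : Log.Term ((↥(Set.univ : Set Z) ⊕ Fin 1) ⊕ Fin 1) :=
  Language.Term.var (Sum.inr 0)

lemma def_eq (c : Z) : Set.Definable Set.univ Log {x : Fin 1 → Z | x 0 = c} := by
  rw [Set.definable_iff_exists_formula_sum]
  refine ⟨Language.Term.equal (Language.Term.var (Sum.inr 0))
    (Language.Term.var (Sum.inl ⟨c, trivial⟩)), ?_⟩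
  ext x
  simp [Language.Formula.realize_equal, Language.Term.realize]

lemma def_le (c : Z) : Set.Definable Set.univ Log {x : Fin 1 → Z | c ≤ x 0} := by
  rw [Set.definable_iff_exists_formula_sum]
  refine ⟨(Language.Relations.formula₂ (OagRel.lt : Log.Relations 2)
    (Language.Term.var (Sum.inr 0)) (Language.Term.var (Sum.inl ⟨c, trivial⟩))).not, ?_⟩
  ext x
  simp only [Set.mem_setOf_eq, Language.Formula.realize_not, Language.Formula.realize_rel₂,
    Language.Term.realize, relMap_lt]
  exact not_lt.symm

lemma def_ge (c : Z) : Set.Definable Set.univ Log {x : Fin 1 → Z | x 0 ≤ c} := by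
  rw [Set.definable_iff_exists_formula_sum]
  refine ⟨(Language.Relations.formula₂ (OagRel.lt : Log.Relations 2)
    (Language.Term.var (Sum.inl ⟨c, trivial⟩)) (Language.Term.var (Sum.inr 0))).not, ?_⟩
  ext x
  simp only [Set.mem_setOf_eq, Language.Formula.realize_not, Language.Formula.realize_rel₂,
    Language.Term.realize, relMap_lt]
  exact not_lt.symm

lemma def_res (n : ℕ) (c : Z) :
    Set.Definable Set.univ Log {x : Fin 1 → Z | ∃ y : Z, (n + 1) • y + c = x 0} := by
  rw [Set.definable_iff_exists_formula_sum]
  refine ⟨Language.BoundedFormula.ex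
    (Language.Term.bdEqual
      (Language.Term.func (L := Log) OagFunc.add ![nsmulT n yT, pT c]) xT), ?_⟩
  ext x
  simp only [Set.mem_setOf_eq, Language.Formula.Realize, Language.BoundedFormula.realize_ex,
    Language.BoundedFormula.realize_bdEqual]
  constructor
  · rintro ⟨y, hy⟩
    refine ⟨y, ?_⟩
    erw [Language.Term.realize_func, funMap_add]
    simp [realize_nsmulT, xT, yT, pT, Language.Term.realize, Fin.snoc, ← hy]
  · rintro ⟨a, ha⟩
    refine ⟨a, ?_⟩
    erw [Language.Term.realize_func, funMap_add] at ha
    simpa [realize_nsmulT, xT, yT, pT, Language.Term.realize, Fin.snoc] using ha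

end Defs

section IntLemma

variable {S : Set ℤ} {n m m' : ℤ}

lemma upT (hn : 0 < n) (hup : ∀ k, m ≤ k → (k ∈ S ↔ k + n ∈ S)) :
    ∀ t : ℕ, ∀ j, m ≤ j → (j ∈ S ↔ j + t * n ∈ S) := by
  intro t
  induction t with
  | zero => simp
  | succ t ih =>
    intro j hj
    rw [hup j hj, show j + ((t : ℕ) + 1 : ℕ) * n = (j + n) + t * n by push_cast; ring]
    exact ih (j + n) (by linarith)

lemma dnT (hn : 0 < n) (hdn : ∀ k, k ≤ m' → (k ∈ S ↔ k - n ∈ S)) :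
    ∀ t : ℕ, ∀ j, j ≤ m' → (j ∈ S ↔ j - t * n ∈ S) := by
  intro t
  induction t with
  | zero => simp
  | succ t ih =>
    intro j hj
    rw [hdn j hj, show j - ((t : ℕ) + 1 : ℕ) * n = (j - n) - t * n by push_cast; ring]
    exact ih (j - n) (by linarith)

lemma evp_char (hn : 0 < n)
    (hup : ∀ k, m ≤ k → (k ∈ S ↔ k + n ∈ S))
    (hdn : ∀ k, k ≤ m' → (k ∈ S ↔ k - n ∈ S)) (k : ℤ) :
    k ∈ S ↔
      ((m ≤ k ∧ ∃ r, m ≤ r ∧ r < m + n ∧ r ∈ S ∧ n ∣ k - r) ∨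
       (k ≤ m' ∧ ∃ r, m' - n < r ∧ r ≤ m' ∧ r ∈ S ∧ n ∣ k - r) ∨
       (m' < k ∧ k < m ∧ k ∈ S)) := by
  constructor
  · intro hk
    rcases le_or_gt m k with hm | hm
    · left
      refine ⟨hm, m + (k - m) % n, le_add_of_nonneg_right (Int.emod_nonneg _ hn.ne'), by
        have := Int.emod_lt_of_pos (k - m) hn; linarith, ?_, ?_⟩
      · have hq : 0 ≤ (k - m) / n := Int.ediv_nonneg (by linarith) hn.le
        have hk' : m + (k - m) % n + ((k - m) / n).toNat * n = k := by
          rw [Int.toNat_of_nonneg hq]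
          have := Int.mul_ediv_add_emod (k - m) n
          linarith
        rw [upT hn hup (((k - m) / n).toNat) _ (le_add_of_nonneg_right
          (Int.emod_nonneg _ hn.ne')), hk']
        exact hk
      · have := Int.mul_ediv_add_emod (k - m) n
        exact ⟨(k - m) / n, by linarith⟩
    · rcases le_or_gt k m' with hm' | hm'
      · right; left
        refine ⟨hm', m' - (m' - k) % n, by
          have := Int.emod_lt_of_pos (m' - k) hn; linarith,
          sub_le_self _ (Int.emod_nonneg _ hn.ne'), ?_, ?_⟩
        · have hq : 0 ≤ (m' - k) / n := Int.ediv_nonneg (by linarith) hn.le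
          have hk' : m' - (m' - k) % n - ((m' - k) / n).toNat * n = k := by
            rw [Int.toNat_of_nonneg hq]
            have := Int.mul_ediv_add_emod (m' - k) n
            linarith
          rw [dnT hn hdn (((m' - k) / n).toNat) _
            (sub_le_self _ (Int.emod_nonneg _ hn.ne')), hk']
          exact hk
        · have := Int.mul_ediv_add_emod (m' - k) n
          exact ⟨-((m' - k) / n), by linarith⟩
      · exact Or.inr (Or.inr ⟨hm', hm, hk⟩)
  · rintro (⟨hm, r, hr1, hr2, hrS, q, hq⟩ | ⟨hm', r, hr1, hr2, hrS, q, hq⟩ | ⟨_, _, h⟩)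
    · have hq0 : 0 ≤ q := by nlinarith
      have := upT hn hup q.toNat r hr1
      rw [Int.toNat_of_nonneg hq0] at this
      rw [show k = r + q * n by linarith]
      exact this.mp hrS
    · have hq0 : q ≤ 0 := by nlinarith
      have := dnT hn hdn (-q).toNat r hr2
      rw [Int.toNat_of_nonneg (by linarith)] at this
      rw [show k = r - (-q) * n by linarith]
      exact this.mp hrS
    · exact h

end IntLemma

section Smul

variable {Z : Type} [AddCommGroup Z] [LinearOrder Z] [IsOrderedAddMonoid Z] {one : Z}

lemma res_iff (h1 : IsLeast {x : Z | 0 < x} one) {p : ℕ} (hp : 0 < p) (k r : ℤ) :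
    (∃ y : Z, p • y + r • one = k • one) ↔ (p : ℤ) ∣ k - r := by
  have hone : (0 : Z) < one := h1.1
  constructor
  · rintro ⟨y, hy⟩
    set q : ℤ := (k - r) / p with hqdef
    set s : ℤ := (k - r) % p with hsdef
    have hs0 : 0 ≤ s := Int.emod_nonneg _ (by exact_mod_cast hp.ne')
    have hsp : s < p := Int.emod_lt_of_pos _ (by exact_mod_cast hp)
    have hde : (p : ℤ) * q + s = k - r := Int.mul_ediv_add_emod _ _
    have hz : p • (y - q • one) = s • one := by
      rw [smul_sub]
      have h2 : p • (q • one) = ((p : ℤ) * q) • one := by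
        rw [mul_zsmul, natCast_zsmul]
      have h3 : p • y = (k - r) • one := by
        rw [sub_zsmul, ← hy]
        abel
      rw [h2, h3, sub_eq_add_neg, ← neg_zsmul, ← add_zsmul]
      congr 1
      omega
    have hs : s = 0 := by
      by_contra hne
      have hspos : 0 < s := lt_of_le_of_ne hs0 (Ne.symm hne)
      have hso : (0 : Z) < s • one := zsmul_pos hone hspos
      rcases le_or_gt (y - q • one) 0 with hle | hlt
      · have : p • (y - q • one) ≤ 0 := nsmul_nonpos hle p
        rw [hz] at this
        exact absurd this (not_le.mpr hso)
      · have hge : one ≤ y - q • one := h1.2 hlt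
        have h4 : p • one ≤ p • (y - q • one) := nsmul_le_nsmul_right hge p
        have h5 : s • one < (p : ℤ) • one := zsmul_lt_zsmul_left hone hsp
        rw [natCast_zsmul] at h5
        rw [hz] at h4
        exact absurd (h5.trans_le h4) (lt_irrefl _)
    exact ⟨q, by omega⟩
  · rintro ⟨q, hq⟩
    refine ⟨q • one, ?_⟩
    rw [← natCast_zsmul, ← mul_zsmul, ← add_zsmul]
    congr 1
    omega

end Smul


/-- If `A ⊆ O = {k • 1_Z : k ∈ ℤ}` corresponds to an eventually periodic subset of `ℤ`,
then `A = B ∩ O` for some definable `B ⊆ Z`. -/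
theorem stmt_15 (Z : Type) [AddCommGroup Z] [LinearOrder Z] [IsOrderedAddMonoid Z] (one : Z)
    (h1 : IsLeast {x : Z | 0 < x} one) (A : Set Z)
    (hAO : A ⊆ Set.range (fun k : ℤ => k • one))
    (hep : EvPeriodic {k : ℤ | k • one ∈ A}) :
    ∃ B : Set Z, Set.Definable₁ (Set.univ : Set Z) Log B ∧
      A = B ∩ Set.range (fun k : ℤ => k • one) := by
  classical
  obtain ⟨n, hn, m, m', hup, hdn⟩ := hep
  have hone : (0 : Z) < one := h1.1
  set p : ℕ := n.toNat with hpdef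
  have hpn : (p : ℤ) = n := Int.toNat_of_nonneg hn.le
  have hp0 : 0 < p := by omega
  set Fp : Finset ℤ := (Finset.Ico m (m + n)).filter (fun r => r • one ∈ A) with hFp
  set Fq : Finset ℤ := (Finset.Ioc (m' - n) m').filter (fun r => r • one ∈ A) with hFq
  set Fm : Finset ℤ := (Finset.Ioo m' m).filter (fun k => k • one ∈ A) with hFm
  set B : Set Z :=
    ((⋃ r ∈ Fp, ({x : Z | m • one ≤ x} ∩ {x : Z | ∃ y : Z, p • y + r • one = x})) ∪
     (⋃ r ∈ Fq, ({x : Z | x ≤ m' • one} ∩ {x : Z | ∃ y : Z, p • y + r • one = x}))) ∪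
    (⋃ k ∈ Fm, {x : Z | x = k • one}) with hB
  have hres : ∀ c : Z,
      Set.Definable Set.univ Log {x : Fin 1 → Z | ∃ y : Z, p • y + c = x 0} := by
    intro c
    have h := def_res (Z := Z) (p - 1) c
    rwa [Nat.sub_add_cancel hp0] at h
  have hBdef : Set.Definable₁ (Set.univ : Set Z) Log B := by
    have e : {x : Fin 1 → Z | x 0 ∈ B} =
        ((⋃ r ∈ Fp, ({x : Fin 1 → Z | m • one ≤ x 0} ∩
            {x : Fin 1 → Z | ∃ y : Z, p • y + r • one = x 0})) ∪
         (⋃ r ∈ Fq, ({x : Fin 1 → Z | x 0 ≤ m' • one} ∩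
            {x : Fin 1 → Z | ∃ y : Z, p • y + r • one = x 0}))) ∪
        (⋃ k ∈ Fm, {x : Fin 1 → Z | x 0 = k • one}) := by
      ext x
      simp [hB]
    rw [Set.Definable₁, e]
    exact ((Set.definable_biUnion_finset (fun r => (def_le _).inter (hres _)) Fp).union
      (Set.definable_biUnion_finset (fun r => (def_ge _).inter (hres _)) Fq)).union
      (Set.definable_biUnion_finset (fun k => def_eq _) Fm)
  have key : ∀ k : ℤ, k • one ∈ B ↔
      ((m ≤ k ∧ ∃ r, m ≤ r ∧ r < m + n ∧ r ∈ {k : ℤ | k • one ∈ A} ∧ n ∣ k - r) ∨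
       (k ≤ m' ∧ ∃ r, m' - n < r ∧ r ≤ m' ∧ r ∈ {k : ℤ | k • one ∈ A} ∧ n ∣ k - r) ∨
       (m' < k ∧ k < m ∧ k ∈ {k : ℤ | k • one ∈ A})) := by
    intro k
    simp only [hB, Set.mem_union, Set.mem_iUnion, Set.mem_inter_iff, Set.mem_setOf_eq,
      hFp, hFq, hFm, Finset.mem_filter, Finset.mem_Ico, Finset.mem_Ioc, Finset.mem_Ioo,
      exists_prop, res_iff h1 hp0, hpn,
      zsmul_le_zsmul_iff_left hone, zsmul_left_inj hone]
    constructor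
    · rintro ((⟨r, ⟨⟨h1', h2'⟩, h3'⟩, h4', h5'⟩ | ⟨r, ⟨⟨h1', h2'⟩, h3'⟩, h4', h5'⟩) |
        ⟨j, ⟨⟨h1', h2'⟩, h3'⟩, h4'⟩)
      · exact Or.inl ⟨h4', r, h1', h2', h3', h5'⟩
      · exact Or.inr (Or.inl ⟨h4', r, by linarith, h2', h3', h5'⟩)
      · subst h4'; exact Or.inr (Or.inr ⟨h1', h2', h3'⟩)
    · rintro (⟨h4', r, h1', h2', h3', h5'⟩ | ⟨h4', r, h1', h2', h3', h5'⟩ | ⟨h1', h2', h3'⟩)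
      · exact Or.inl (Or.inl ⟨r, ⟨⟨h1', h2'⟩, h3'⟩, h4', h5'⟩)
      · exact Or.inl (Or.inr ⟨r, ⟨⟨by linarith, h2'⟩, h3'⟩, h4', h5'⟩)
      · exact Or.inr ⟨k, ⟨⟨h1', h2'⟩, h3'⟩, rfl⟩
  refine ⟨B, hBdef, ?_⟩
  ext x
  constructor
  · intro hx
    obtain ⟨k, hk⟩ := hAO hx
    have hkS : k ∈ {k : ℤ | k • one ∈ A} := by simpa [hk] using hx
    exact ⟨by rw [← hk, key]; exact (evp_char hn hup hdn k).mp hkS, ⟨k, hk⟩⟩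
  · rintro ⟨hBx, k, hk⟩
    have : k ∈ {k : ℤ | k • one ∈ A} :=
      (evp_char hn hup hdn k).mpr ((key k).mp (by rw [show k • one = x from hk]; exact hBx))
    rw [← hk]; exact this
end
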